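/- Let B be a zero-dimensional separable metrizable space, let F be any presheaf of types on B, and let G be a sheaf of types on B. Then Supp Hom(F,G) = interior(Supp G ∪ (B ∖ Supp F)); that is, for an open U ⊆ B there exists a presheaf morphism F|_U → G|_U in arbitrarily small neighborhoods of a point b if and only if b ∈ interior(Supp G ∪ (B ∖ Supp F)); in particular, for every open U with U ∩ Supp F ⊆ Supp G there exists a presheaf morphism F|_U → G|_U. -/

import Mathlib

open TopologicalSpace

/-- A presheaf of types on a topological space `B`. -/
structure Psh (B : Type) [TopologicalSpace B] where
  obj : Opens B → Type
  res : ∀ {U V : Opens B}, V ≤ U → obj U → obj V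
  res_id : ∀ (U : Opens B) (x : obj U), res le_rfl x = x
  res_comp : ∀ {U V W : Opens B} (hWV : W ≤ V) (hVU : V ≤ U) (x : obj U),
    res hWV (res hVU x) = res (hWV.trans hVU) x

namespace Psh

variable {B : Type} [TopologicalSpace B]

/-- The sheaf conditions: separation and gluing for arbitrary open covers. -/
def IsSheaf (F : Psh B) : Prop :=
  ∀ {ι : Type} (U : Opens B) (V : ι → Opens B) (hV : ∀ i, V i ≤ U),
    (∀ x ∈ U, ∃ i, x ∈ V i) →
    (∀ s t : F.obj U, (∀ i, F.res (hV i) s = F.res (hV i) t) → s = t) ∧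
    ∀ sf : ∀ i, F.obj (V i),
      (∀ i j, F.res (inf_le_left : V i ⊓ V j ≤ V i) (sf i)
            = F.res (inf_le_right : V i ⊓ V j ≤ V j) (sf j)) →
      ∃ s : F.obj U, ∀ i, F.res (hV i) s = sf i

/-- The support of a presheaf: the union of all open sets with nonempty sections. -/
def supp (F : Psh B) : Set B := {b | ∃ U : Opens B, b ∈ U ∧ Nonempty (F.obj U)}

/-- The germ relation at a point. -/
def stalkRel (F : Psh B) (b : B) :
    (Σ U : {U : Opens B // b ∈ U}, F.obj U.1) →
      (Σ U : {U : Opens B // b ∈ U}, F.obj U.1) → Prop :=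
  fun x y => ∃ (W : Opens B) (_ : b ∈ W) (h1 : W ≤ x.1.1) (h2 : W ≤ y.1.1),
    F.res h1 x.2 = F.res h2 y.2

/-- The stalk of a presheaf at a point: the set of germs, i.e. the colimit of
sections over open neighborhoods of the point. -/
def stalk (F : Psh B) (b : B) : Type := Quot (F.stalkRel b)

/-- The germ of a section at a point. -/
def germ (F : Psh B) {b : B} {U : Opens B} (hb : b ∈ U) (s : F.obj U) : F.stalk b :=
  Quot.mk _ ⟨⟨U, hb⟩, s⟩

/-- A morphism of presheaves `F|_U → G|_U` (restricted to opens contained in `U`). -/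
structure Hom (F G : Psh B) (U : Opens B) where
  app : ∀ (V : Opens B), V ≤ U → F.obj V → G.obj V
  natural : ∀ {V W : Opens B} (hVU : V ≤ U) (hWV : W ≤ V) (s : F.obj V),
    G.res hWV (app V hVU s) = app W (hWV.trans hVU) (F.res hWV s)

/-- The Hom-presheaf `U ↦ {presheaf morphisms F|_U → G|_U}`. -/
def homPsh (F G : Psh B) : Psh B where
  obj U := Hom F G U
  res {U V} h φ :=
    { app := fun W hW => φ.app W (hW.trans h)
      natural := fun hVU hWV s => φ.natural _ hWV s }
  res_id := fun U φ => rfl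
  res_comp := fun _ _ _ => rfl

/-- Objectwise binary product of presheaves. -/
def prodObj (F G : Psh B) : Psh B where
  obj U := F.obj U × G.obj U
  res h x := (F.res h x.1, G.res h x.2)
  res_id U x := by (try dsimp only); rw [F.res_id, G.res_id]
  res_comp h1 h2 x := by (try dsimp only); rw [F.res_comp, G.res_comp]

/-- Objectwise binary coproduct of presheaves. -/
def sumObj (F G : Psh B) : Psh B where
  obj U := F.obj U ⊕ G.obj U
  res h x := x.elim (fun a => Sum.inl (F.res h a)) (fun c => Sum.inr (G.res h c))
  res_id U x := by
    cases x with
    | inl a => simp only [Sum.elim_inl]; rw [F.res_id]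
    | inr c => simp only [Sum.elim_inr]; rw [G.res_id]
  res_comp h1 h2 x := by
    cases x with
    | inl a => simp only [Sum.elim_inl]; rw [F.res_comp]
    | inr c => simp only [Sum.elim_inr]; rw [G.res_comp]

/-- Objectwise product of a family of presheaves. -/
def piObj {ι : Type} (F : ι → Psh B) : Psh B where
  obj U := ∀ i, (F i).obj U
  res h x i := (F i).res h (x i)
  res_id U x := by funext i; exact (F i).res_id U (x i)
  res_comp h1 h2 x := by funext i; exact (F i).res_comp h1 h2 (x i)

/-- Objectwise coproduct (disjoint union) of a family of presheaves. -/
def sigmaObj {ι : Type} (F : ι → Psh B) : Psh B where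
  obj U := Σ i, (F i).obj U
  res h x := ⟨x.1, (F x.1).res h x.2⟩
  res_id U x := by
    rcases x with ⟨i, s⟩
    exact congrArg (Sigma.mk i) ((F i).res_id U s)
  res_comp h1 h2 x := by
    rcases x with ⟨i, s⟩
    exact congrArg (Sigma.mk i) ((F i).res_comp h1 h2 s)

/-- The characteristic presheaf of an open set: a one-element type on opens
contained in `W`, the empty type elsewhere. -/
def char (W : Opens B) : Psh B where
  obj U := PLift (U ≤ W)
  res h x := ⟨h.trans x.down⟩
  res_id U x := rfl
  res_comp _ _ _ := rfl

/-- An isomorphism of presheaves. -/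
structure Iso (F G : Psh B) where
  hom : ∀ U, F.obj U ≃ G.obj U
  natural : ∀ {U V : Opens B} (h : V ≤ U) (s : F.obj U),
    G.res h (hom U s) = hom V (F.res h s)

end Psh

section Aux
namespace Psh

variable {B : Type} [TopologicalSpace B]

lemma isOpen_supp' (F : Psh B) : IsOpen F.supp := by
  refine isOpen_iff_forall_mem_open.mpr ?_
  rintro b ⟨U, hb, hne⟩
  exact ⟨U, fun x hx => ⟨U, hx, hne⟩, U.2, hb⟩

lemma obj_empty_subsingleton' {G : Psh B} (hG : G.IsSheaf) {W : Opens B}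
    (hW : (W : Set B) = ∅) (s t : G.obj W) : s = t := by
  have h := hG (ι := Empty) W (fun i => i.elim) (fun i => i.elim)
    (fun x hx => by
      have : x ∈ (W : Set B) := hx
      rw [hW] at this; exact this.elim)
  exact h.1 s t (fun i => i.elim)

lemma obj_empty_nonempty' {G : Psh B} (hG : G.IsSheaf) {W : Opens B}
    (hW : (W : Set B) = ∅) : Nonempty (G.obj W) := by
  have h := hG (ι := Empty) W (fun i => i.elim) (fun i => i.elim)
    (fun x hx => by
      have : x ∈ (W : Set B) := hx
      rw [hW] at this; exact this.elim)
  obtain ⟨s, -⟩ := h.2 (fun i => i.elim) (fun i => i.elim)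
  exact ⟨s⟩

lemma exists_section' {G : Psh B} [SecondCountableTopology B] (hG : G.IsSheaf)
    (hclopen : TopologicalSpace.IsTopologicalBasis {s : Set B | IsClopen s})
    (W : TopologicalSpace.Opens B) (hW : (W : Set B) ⊆ G.supp) : Nonempty (G.obj W) := by
  classical
  by_cases hWe : (W : Set B) = ∅
  · exact obj_empty_nonempty' hG hWe
  -- choose clopen neighborhoods
  have h1 : ∀ x : (W : Set B), ∃ (V : TopologicalSpace.Opens B) (C : Set B),
      IsClopen C ∧ (x : B) ∈ C ∧ C ⊆ (V : Set B) ∧ C ⊆ (W : Set B) ∧ Nonempty (G.obj V) := by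
    intro x
    obtain ⟨V, hxV, hne⟩ := hW x.2
    obtain ⟨C, hC, hxC, hCsub⟩ := hclopen.exists_subset_of_mem_open
      (show (x : B) ∈ (V : Set B) ∩ W from ⟨hxV, x.2⟩) (V.2.inter W.2)
    exact ⟨V, C, hC, hxC, fun y hy => (hCsub hy).1, fun y hy => (hCsub hy).2, hne⟩
  choose V C hC hxC hCV hCW hne using h1
  -- countable subcover
  obtain ⟨T, hTc, hTU⟩ := TopologicalSpace.isOpen_iUnion_countable C (fun x => (hC x).isOpen)
  have hUnion : ⋃ x, C x = (W : Set B) := by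
    apply Set.Subset.antisymm
    · exact Set.iUnion_subset fun x => hCW x
    · intro y hy; exact Set.mem_iUnion.mpr ⟨⟨y, hy⟩, hxC ⟨y, hy⟩⟩
  have hTne : T.Nonempty := by
    by_contra hT
    rw [Set.not_nonempty_iff_eq_empty] at hT
    rw [hT] at hTU
    simp only [Set.mem_empty_iff_false, Set.iUnion_of_empty, Set.iUnion_empty] at hTU
    rw [hUnion] at hTU
    exact hWe hTU.symm
  obtain ⟨f, hf⟩ := hTc.exists_eq_range hTne
  -- disjointify
  set D : ℕ → TopologicalSpace.Opens B := fun n =>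
    ⟨C (f n) \ ⋃ m ∈ Finset.range n, C (f m),
      (hC (f n)).isOpen.sdiff (Set.Finite.isClosed_biUnion (Finset.finite_toSet _)
        fun m _ => (hC (f m)).isClosed)⟩ with hD
  have hDC : ∀ n, (D n : Set B) ⊆ C (f n) := fun n y hy => hy.1
  have hDW : ∀ n, D n ≤ W := fun n y hy => hCW (f n) (hDC n hy)
  have hcover : ∀ x, x ∈ W → ∃ n, x ∈ D n := by
    intro x hx
    have hx' : x ∈ ⋃ y ∈ T, C y := by rw [hTU, hUnion]; exact hx
    obtain ⟨y, hyT, hxy⟩ := Set.mem_iUnion₂.mp hx'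
    rw [hf] at hyT
    obtain ⟨n, rfl⟩ := hyT
    have hex : ∃ n, x ∈ C (f n) := ⟨n, hxy⟩
    refine ⟨Nat.find hex, Nat.find_spec hex, ?_⟩
    intro hmem
    obtain ⟨m, hm⟩ := Set.mem_iUnion.mp hmem
    obtain ⟨hm1, hm2⟩ := Set.mem_iUnion.mp hm
    exact Nat.find_min hex (Finset.mem_range.mp hm1) hm2
  -- sections on pieces
  have sf : ∀ n, G.obj (D n) := fun n =>
    G.res (fun y hy => hCV (f n) (hDC n hy)) (Classical.choice (hne (f n)))
  have hdisj : ∀ n m, n ≠ m → ((D n ⊓ D m : TopologicalSpace.Opens B) : Set B) = ∅ := by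
    intro n m hnm
    ext x
    simp only [Set.mem_empty_iff_false, iff_false]
    intro hx
    have hx1 : x ∈ (D n : Set B) := hx.1
    have hx2 : x ∈ (D m : Set B) := hx.2
    rcases lt_or_gt_of_ne hnm with h | h
    · exact hx2.2 (Set.mem_biUnion (Finset.mem_range.mpr h) hx1.1)
    · exact hx1.2 (Set.mem_biUnion (Finset.mem_range.mpr h) hx2.1)
  obtain ⟨s, -⟩ := (hG W D hDW hcover).2 sf (by
    intro n m
    by_cases h : n = m
    · subst h; rfl
    · exact obj_empty_subsingleton' hG (hdisj n m h) _ _)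
  exact ⟨s⟩

end Psh
end Aux

/-- Over a zero-dimensional separable metrizable space, for a presheaf `F` and a
sheaf `G` one has `Supp Hom(F,G) = interior (Supp G ∪ (B ∖ Supp F))`; in
particular, for every open `U` with `U ∩ Supp F ⊆ Supp G` there is a presheaf
morphism `F|_U → G|_U`. -/
theorem stmt_14 {B : Type} [TopologicalSpace B] [MetrizableSpace B]
    [SecondCountableTopology B]
    (hclopen : IsTopologicalBasis {s : Set B | IsClopen s})
    (F G : Psh B) (hG : G.IsSheaf) :
    (Psh.homPsh F G).supp = interior (G.supp ∪ F.suppᶜ) ∧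
    ∀ U : Opens B, (U : Set B) ∩ F.supp ⊆ G.supp → Nonempty (Psh.Hom F G U) := by
  have part2 : ∀ U : Opens B, (U : Set B) ∩ F.supp ⊆ G.supp →
      Nonempty (Psh.Hom F G U) := by
    intro U hU
    set W : Opens B := ⟨(U : Set B) ∩ F.supp, U.2.inter F.isOpen_supp'⟩ with hWdef
    obtain ⟨t⟩ := Psh.exists_section' hG hclopen W hU
    refine ⟨⟨fun V hVU s =>
      G.res (show V ≤ W from fun x hx => ⟨hVU hx, V, hx, ⟨s⟩⟩) t, ?_⟩⟩
    intro V V' hVU hV'V s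
    rw [G.res_comp]
  refine ⟨?_, part2⟩
  apply Set.Subset.antisymm
  · rintro b ⟨U, hb, ⟨φ⟩⟩
    refine mem_interior.mpr ⟨U, ?_, U.2, hb⟩
    intro x hx
    by_cases hxF : x ∈ F.supp
    · left
      obtain ⟨V, hxV, ⟨s⟩⟩ := hxF
      refine ⟨V ⊓ U, ⟨hxV, hx⟩, ⟨φ.app (V ⊓ U) inf_le_right (F.res inf_le_left s)⟩⟩
    · exact Or.inr hxF
  · intro b hb
    set U : Opens B := ⟨interior (G.supp ∪ F.suppᶜ), isOpen_interior⟩ with hUdef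
    have hsub : (U : Set B) ∩ F.supp ⊆ G.supp := by
      rintro x ⟨hx1, hx2⟩
      rcases interior_subset hx1 with h | h
      · exact h
      · exact absurd hx2 h
    obtain ⟨φ⟩ := part2 U hsub
    exact ⟨U, hb, ⟨φ⟩⟩
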